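/- If f: Z → R is a quasipolynomial of degree D (f(t) = c_D(t)t^D + ... + c_0(t) with each c_i periodic and c_D not identically zero) which is monotonically nondecreasing on positive integers, then the leading coefficient function c_D is constant. -/

import Mathlib

open Filter Topology

lemma aux_tendsto (D i : ℕ) (hi : i ≤ D) (a Tr : ℝ) :
    Tendsto (fun n : ℕ => (a + n * Tr) ^ i / (n : ℝ) ^ D) atTop
      (𝓝 (if i = D then Tr ^ D else 0)) := by
  have h1 : Tendsto (fun n : ℕ => a / n + Tr) atTop (𝓝 Tr) := by
    simpa using (tendsto_const_div_atTop_nhds_zero_nat a).add_const Tr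
  rcases eq_or_lt_of_le hi with rfl | hlt
  · rw [if_pos rfl]
    refine ((h1.pow i).congr' ?_)
    filter_upwards [eventually_ge_atTop 1] with n hn
    have hn' : (n : ℝ) ≠ 0 := by positivity
    rw [← div_pow]; congr 1; field_simp
  · rw [if_neg (by omega)]
    have h2 : Tendsto (fun n : ℕ => ((1 : ℝ) / n) ^ (D - i)) atTop (𝓝 0) := by
      have := (tendsto_const_div_atTop_nhds_zero_nat (1 : ℝ)).pow (D - i)
      rwa [zero_pow (by omega)] at this
    have h3 : Tendsto (fun n : ℕ => (a / n + Tr) ^ i * ((1 : ℝ) / n) ^ (D - i))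
        atTop (𝓝 0) := by simpa using (h1.pow i).mul h2
    refine h3.congr' ?_
    filter_upwards [eventually_ge_atTop 1] with n hn
    have hn' : (n : ℝ) ≠ 0 := by positivity
    have hx : (a / n + Tr) = (a + n * Tr) / n := by field_simp
    rw [hx, div_pow, div_pow, div_mul_div_comm, one_pow, mul_one,
      ← pow_add, Nat.add_sub_cancel' hi]

lemma aux_sum_tendsto (D : ℕ) (c' : ℕ → ℝ) (a Tr : ℝ) :
    Tendsto (fun n : ℕ =>
        (∑ i ∈ Finset.range (D + 1), c' i * (a + n * Tr) ^ i) / (n : ℝ) ^ D)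
      atTop (𝓝 (c' D * Tr ^ D)) := by
  have h : Tendsto (fun n : ℕ =>
      ∑ i ∈ Finset.range (D + 1), c' i * ((a + n * Tr) ^ i / (n : ℝ) ^ D)) atTop
      (𝓝 (∑ i ∈ Finset.range (D + 1), c' i * (if i = D then Tr ^ D else 0))) := by
    refine tendsto_finset_sum _ (fun i hi => ?_)
    exact (aux_tendsto D i (by simpa [Nat.lt_succ_iff] using hi) a Tr).const_mul _
  have heq : (∑ i ∈ Finset.range (D + 1), c' i * (if i = D then Tr ^ D else 0))
      = c' D * Tr ^ D := by
    rw [Finset.sum_eq_single D] <;> simp +contextual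
  rw [heq] at h
  refine h.congr (fun n => ?_)
  rw [Finset.sum_div]
  exact Finset.sum_congr rfl (fun i _ => (mul_div_assoc _ _ _).symm)

/-- If `f(t) = Σ_{i=0}^D c_i(t) t^i` is a quasipolynomial of degree `D`
(each `c_i` periodic, `c_D` not identically zero) which is monotonically
nondecreasing on positive integers, then the leading coefficient function
`c_D` is constant. -/
theorem leading_coeff_constant (D : ℕ) (c : ℕ → ℤ → ℝ)
    (hper : ∀ i ≤ D, ∃ T : ℕ, 0 < T ∧ ∀ t : ℤ, c i (t + T) = c i t)
    (hcD : ∃ t : ℤ, c D t ≠ 0)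
    (hmono : ∀ t : ℤ, 1 ≤ t →
      (∑ i ∈ Finset.range (D + 1), c i t * (t : ℝ) ^ i) ≤
      (∑ i ∈ Finset.range (D + 1), c i (t + 1) * ((t : ℝ) + 1) ^ i)) :
    ∀ s t : ℤ, c D s = c D t := by
  classical
  set f : ℤ → ℝ := fun t => ∑ i ∈ Finset.range (D + 1), c i t * (t : ℝ) ^ i with hf
  -- common period
  set P : ℕ → ℕ := fun i => if h : i ≤ D then (hper i h).choose else 1 with hP
  have hPpos : ∀ i, 0 < P i := by
    intro i; simp only [hP]; split
    · exact (hper i ‹_›).choose_spec.1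
    · exact one_pos
  have hPper : ∀ i ≤ D, ∀ t : ℤ, c i (t + P i) = c i t := by
    intro i hi t; simp only [hP, dif_pos hi]; exact (hper i hi).choose_spec.2 t
  set T : ℕ := ∏ i ∈ Finset.range (D + 1), P i with hT
  have hTpos : 0 < T := Finset.prod_pos (fun i _ => hPpos i)
  have hTper : ∀ i ≤ D, ∀ m : ℤ, ∀ t : ℤ, c i (t + m * T) = c i t := by
    intro i hi m t
    have hdvd : P i ∣ T := Finset.dvd_prod_of_mem P (Finset.mem_range.2 (by omega))
    obtain ⟨k, hk⟩ := hdvd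
    have hper1 : Function.Periodic (c i) ((P i : ℤ)) := fun x => hPper i hi x
    have hperT : Function.Periodic (c i) ((T : ℤ)) := by
      have := hper1.nat_mul k
      rwa [show ((k : ℤ) * (P i : ℤ)) = (T : ℤ) by push_cast [hk]; ring] at this
    have h := hperT.int_mul m t
    simp only [Int.cast_id] at h
    simpa [mul_comm] using h
  -- monotone chain
  have hstep : ∀ w : ℤ, 1 ≤ w → f w ≤ f (w + 1) := by
    intro w hw
    have := hmono w hw
    simpa [hf] using this
  have hchain : ∀ u v : ℤ, 1 ≤ u → u ≤ v → f u ≤ f v := by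
    intro u v hu huv
    exact Int.le_induction (motive := fun v _ => f u ≤ f v) (le_refl _)
      (fun w hw ih => le_trans ih (hstep w (by omega))) v huv
  intro s t
  set Tz : ℤ := (T : ℤ) with hTz
  have hTz1 : 1 ≤ Tz := by rw [hTz]; exact_mod_cast hTpos
  set s' : ℤ := s + (|s| + 1) * Tz with hs'
  have hs'1 : 1 ≤ s' := by
    have h1 : (|s| + 1) * 1 ≤ (|s| + 1) * Tz :=
      mul_le_mul_of_nonneg_left hTz1 (by positivity)
    have habs := neg_abs_le s
    omega
  set q : ℤ := (t - s') / Tz with hq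
  set t' : ℤ := s' + (t - s') % Tz with ht'
  have hmod0 : 0 ≤ (t - s') % Tz := Int.emod_nonneg _ (by omega)
  have hmodlt : (t - s') % Tz < Tz := Int.emod_lt_of_pos _ (by omega)
  have ht'eq : t' = t + (-q) * Tz := by
    have h2 := Int.emod_add_mul_ediv (t - s') Tz
    rw [ht', hq]
    linear_combination h2
  -- the three limits
  have key : ∀ u : ℤ, 1 ≤ u →
      Tendsto (fun n : ℕ => f (u + n * Tz) / (n : ℝ) ^ D) atTop
        (𝓝 (c D u * (T : ℝ) ^ D)) := by
    intro u hu
    have h := aux_sum_tendsto D (fun i => c i u) (u : ℝ) (T : ℝ)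
    refine h.congr (fun n => ?_)
    congr 1
    refine Finset.sum_congr rfl (fun i hi => ?_)
    have hi' : i ≤ D := by simpa [Nat.lt_succ_iff] using hi
    rw [show u + (n : ℤ) * Tz = u + (n : ℤ) * T from rfl, hTper i hi' n u]
    push_cast
    ring_nf
  have lim1 := key s' hs'1
  have lim2 := key t' (by omega)
  have lim3 := key (s' + Tz) (by omega)
  -- rewrite limit values using periodicity
  have e1 : c D s' = c D s := by rw [hs']; exact hTper D le_rfl (|s| + 1) s
  have e2 : c D t' = c D t := by rw [ht'eq]; exact hTper D le_rfl (-q) t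
  have e3 : c D (s' + Tz) = c D s := by
    have h1 : c D (s' + Tz) = c D s' := by simpa using hTper D le_rfl 1 s'
    rw [h1, e1]
  rw [e1] at lim1; rw [e2] at lim2; rw [e3] at lim3
  -- inequalities between the sequences, for n ≥ 1
  have hineq : ∀ u v : ℤ, 1 ≤ u → u ≤ v →
      ∀ n : ℕ, 1 ≤ n → f (u + n * Tz) / (n : ℝ) ^ D ≤ f (v + n * Tz) / (n : ℝ) ^ D := by
    intro u v hu huv n hn
    have hnT : (0 : ℤ) ≤ n * Tz := mul_nonneg (by positivity) (by omega)
    have h := hchain (u + n * Tz) (v + n * Tz) (by omega) (by omega)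
    have hpos : (0 : ℝ) < (n : ℝ) ^ D := by positivity
    exact by gcongr
  have ev1 : (fun n : ℕ => f (s' + n * Tz) / (n : ℝ) ^ D) ≤ᶠ[atTop]
      (fun n : ℕ => f (t' + n * Tz) / (n : ℝ) ^ D) := by
    filter_upwards [eventually_ge_atTop 1] with n hn
    exact hineq s' t' hs'1 (by omega) n hn
  have ev2 : (fun n : ℕ => f (t' + n * Tz) / (n : ℝ) ^ D) ≤ᶠ[atTop]
      (fun n : ℕ => f (s' + Tz + n * Tz) / (n : ℝ) ^ D) := by
    filter_upwards [eventually_ge_atTop 1] with n hn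
    exact hineq t' (s' + Tz) (by omega) (by omega) n hn
  have le1 : c D s * (T : ℝ) ^ D ≤ c D t * (T : ℝ) ^ D :=
    le_of_tendsto_of_tendsto lim1 lim2 ev1
  have le2 : c D t * (T : ℝ) ^ D ≤ c D s * (T : ℝ) ^ D :=
    le_of_tendsto_of_tendsto lim2 lim3 ev2
  have hTrpos : (0 : ℝ) < (T : ℝ) ^ D := by positivity
  have := le_antisymm le1 le2
  exact mul_right_cancel₀ (ne_of_gt hTrpos) this
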